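/- Suppose r(v) = r̄ for all v ∈ {1,…,V}, where r̄ > 0. Fix b ∈ {1,…,B}. If h(b) + min_{s ∈ S} (c(s) − s·r̄) ≤ 0, then the map v ↦ μ(b,v) is non-increasing on {1,…,V}. -/
import Mathlib


/-- `delta S hS c h r b v` is δ(b,v): δ(b,0) = 0 and
δ(b,v) = h(b) + min_{s ∈ S} (c(s) − s·(r(v) + Σ_{i=0}^{v−1} δ(b,i))). -/
noncomputable def delta (S : Finset ℝ) (hS : S.Nonempty) (c : ℝ → ℝ) (h r : ℕ → ℝ)
    (b : ℕ) : ℕ → ℝ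
  | 0 => 0
  | v + 1 => h b + S.inf' hS (fun s =>
      c s - s * (r (v + 1) + ∑ i ∈ (Finset.range (v + 1)).attach, delta S hS c h r b i.1))
decreasing_by exact Finset.mem_range.mp i.2

/-- `sigma S hS c h r b v` is σ(b,v) = Σ_{i=0}^{v} δ(b,i). -/
noncomputable def sigma (S : Finset ℝ) (hS : S.Nonempty) (c : ℝ → ℝ) (h r : ℕ → ℝ)
    (b v : ℕ) : ℝ :=
  ∑ i ∈ Finset.range (v + 1), delta S hS c h r b i

open Classical

/-- `gmin S hS c x` = the least element of the set of minimizers over s ∈ S of c(s) − s·x. -/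
noncomputable def gmin (S : Finset ℝ) (hS : S.Nonempty) (c : ℝ → ℝ) (x : ℝ) : ℝ :=
  (S.filter (fun s => ∀ s' ∈ S, c s - s * x ≤ c s' - s' * x)).min'
    (by
      obtain ⟨s, hs, hmin⟩ := S.exists_min_image (fun s => c s - s * x) hS
      exact ⟨s, Finset.mem_filter.mpr ⟨hs, fun s' hs' => hmin s' hs'⟩⟩)

/-- μ(b,v) = g(r(v) + σ(b,v−1)). -/
noncomputable def mu (S : Finset ℝ) (hS : S.Nonempty) (c : ℝ → ℝ) (h r : ℕ → ℝ)
    (b v : ℕ) : ℝ :=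
  gmin S hS c (r v + sigma S hS c h r b (v - 1))

section Aux

variable (S : Finset ℝ) (hS : S.Nonempty) (c : ℝ → ℝ) (h r : ℕ → ℝ) (b : ℕ)

lemma gmin_mem_filter (x : ℝ) :
    gmin S hS c x ∈ S.filter (fun s => ∀ s' ∈ S, c s - s * x ≤ c s' - s' * x) := by
  unfold gmin; exact Finset.min'_mem _ _

lemma gmin_mem (x : ℝ) : gmin S hS c x ∈ S :=
  (Finset.mem_filter.mp (gmin_mem_filter S hS c x)).1

lemma gmin_isMin (x : ℝ) : ∀ s' ∈ S,
    c (gmin S hS c x) - gmin S hS c x * x ≤ c s' - s' * x :=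
  (Finset.mem_filter.mp (gmin_mem_filter S hS c x)).2

lemma gmin_mono (x y : ℝ) (hxy : x ≤ y) : gmin S hS c x ≤ gmin S hS c y := by
  rcases eq_or_lt_of_le hxy with rfl | hlt
  · exact le_rfl
  · have h1 := gmin_isMin S hS c x (gmin S hS c y) (gmin_mem S hS c y)
    have h2 := gmin_isMin S hS c y (gmin S hS c x) (gmin_mem S hS c x)
    nlinarith

lemma inf'_eq_gmin (x : ℝ) :
    S.inf' hS (fun s => c s - s * x) = c (gmin S hS c x) - gmin S hS c x * x :=
  le_antisymm (Finset.inf'_le _ (gmin_mem S hS c x))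
    (Finset.le_inf' _ _ (gmin_isMin S hS c x))

lemma delta_succ (v : ℕ) :
    delta S hS c h r b (v + 1)
      = h b + S.inf' hS (fun s => c s - s * (r (v + 1) + sigma S hS c h r b v)) := by
  rw [delta]
  congr 2
  funext s
  rw [Finset.sum_attach (Finset.range (v + 1)) (fun i => delta S hS c h r b i)]
  rfl

lemma sigma_succ (v : ℕ) :
    sigma S hS c h r b (v + 1) = sigma S hS c h r b v + delta S hS c h r b (v + 1) := by
  unfold sigma
  rw [Finset.sum_range_succ]

lemma sigma_zero : sigma S hS c h r b 0 = 0 := by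
  simp [sigma, delta]

end Aux

/-- Constant reward r(v) = r̄ on {1,…,V}. If h(b) + min_{s∈S}(c(s) − s·r̄) ≤ 0,
then v ↦ μ(b,v) is non-increasing on {1,…,V}. -/
theorem stmt15
    (S : Finset ℝ) (hS : S.Nonempty) (hS01 : ∀ s ∈ S, s ∈ Set.Icc (0 : ℝ) 1)
    (c : ℝ → ℝ) (hc0 : ∀ s ∈ S, 0 ≤ c s)
    (hcmono : ∀ s ∈ S, ∀ s' ∈ S, s ≤ s' → c s ≤ c s')
    (h : ℕ → ℝ) (hh0 : ∀ b, 0 ≤ h b) (hhmono : Monotone h)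
    (r : ℕ → ℝ) (hrmono : Monotone r) (hr0 : r 0 = 0) (hrpos : ∀ v, 1 ≤ v → 0 < r v)
    (B V : ℕ) (hB : 0 < B) (hV : 0 < V)
    (rbar : ℝ) (hrbar : 0 < rbar) (hrconst : ∀ v, 1 ≤ v → v ≤ V → r v = rbar)
    (b : ℕ) (hb1 : 1 ≤ b) (hbB : b ≤ B)
    (hneg : h b + S.inf' hS (fun s => c s - s * rbar) ≤ 0) :
    ∀ v v', 1 ≤ v → v ≤ v' → v' ≤ V →
      mu S hS c h r b v' ≤ mu S hS c h r b v := by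
  have hdelta : ∀ w, 1 ≤ w → w ≤ V → delta S hS c h r b w ≤ 0 := by
    intro w
    induction w with
    | zero => intro h1 _; omega
    | succ n ih =>
      intro _ hle
      rcases Nat.eq_zero_or_pos n with rfl | hn
      · rw [delta_succ, sigma_zero, hrconst 1 le_rfl hle]
        simpa using hneg
      · obtain ⟨m, rfl⟩ := Nat.exists_eq_succ_of_ne_zero hn.ne'
        have hdn : delta S hS c h r b (m + 1) ≤ 0 :=
          ih (Nat.succ_le_succ (Nat.zero_le m)) (by omega)
        set x := r (m + 1) + sigma S hS c h r b m with hxdef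
        set μ := gmin S hS c x with hμdef
        have hμS : μ ∈ S := gmin_mem S hS c x
        have hμ01 : μ ∈ Set.Icc (0 : ℝ) 1 := hS01 μ hμS
        have hx : delta S hS c h r b (m + 1) = h b + (c μ - μ * x) := by
          rw [delta_succ, inf'_eq_gmin]
        have hr1 : r (m + 1) = rbar := hrconst (m + 1) (by omega) (by omega)
        have hr2 : r (m + 2) = rbar := hrconst (m + 2) (by omega) hle
        have hsig : sigma S hS c h r b (m + 1)
            = sigma S hS c h r b m + delta S hS c h r b (m + 1) := sigma_succ _ _ _ _ _ _ _
        have hle2 : delta S hS c h r b (m + 2)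
            ≤ h b + (c μ - μ * (r (m + 2) + sigma S hS c h r b (m + 1))) := by
          rw [delta_succ]
          have := Finset.inf'_le (b := μ)
            (f := fun s => c s - s * (r (m + 2) + sigma S hS c h r b (m + 1))) hμS
          linarith
        obtain ⟨hμ0, hμ1⟩ := hμ01
        nlinarith [hle2, hdn, hx, hsig]
  have hsigmono : ∀ j k, j ≤ k → k + 1 ≤ V →
      sigma S hS c h r b k ≤ sigma S hS c h r b j := by
    intro j k
    induction k with
    | zero => intro hjk _; have : j = 0 := Nat.le_zero.mp hjk; subst this; exact le_rfl
    | succ n ih =>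
      intro hjk hkV
      rcases eq_or_lt_of_le hjk with rfl | hlt
      · exact le_rfl
      · have hjn : j ≤ n := Nat.lt_succ_iff.mp hlt
        have h1 : delta S hS c h r b (n + 1) ≤ 0 :=
          hdelta (n + 1) (Nat.succ_le_succ (Nat.zero_le n)) (by omega)
        have h2 := ih hjn (by omega)
        rw [sigma_succ]; linarith
  intro v v' hv1 hvv' hv'V
  unfold mu
  apply gmin_mono
  have hr1 : r v = rbar := hrconst v hv1 (le_trans hvv' hv'V)
  have hr2 : r v' = rbar := hrconst v' (le_trans hv1 hvv') hv'V
  have hs : sigma S hS c h r b (v' - 1) ≤ sigma S hS c h r b (v - 1) :=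
    hsigmono (v - 1) (v' - 1) (by omega) (by omega)
  rw [hr1, hr2]
  linarith
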